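/- For every integer n > 1, the n-pack graph admits a Neighborhood Balanced Coloring: color the base vertex blue, all n numeric vertices red, and, for each numeric vertex, color one of its two support vertices blue and the other red. -/

import Mathlib

/-- A *Neighborhood Balanced Coloring* of a graph `G`: a red/blue coloring
(`true` = red, `false` = blue) such that every vertex has as many red
(open) neighbors as blue neighbors. -/
def IsNBC {V : Type*} (G : SimpleGraph V) (c : V → Bool) : Prop :=
  ∀ v : V, Nat.card {w : V // G.Adj v w ∧ c w = true}
         = Nat.card {w : V // G.Adj v w ∧ c w = false}

/-- Vertex type of an `m`-pack: for `m ≥ 2` one base vertex (`Sum.inl`),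
`2m` support vertices (`Sum.inr (Sum.inl (i, b))`) and `m` numeric vertices
(`Sum.inr (Sum.inr i)`); a `1`-pack is a single numeric vertex. -/
def PackV : ℕ → Type
  | 0 => Empty
  | 1 => Unit
  | (m + 2) => Unit ⊕ ((Fin (m + 2) × Bool) ⊕ Fin (m + 2))

/-- Base relation generating the edges of an `m`-pack: the base vertex is
adjacent to every support vertex, and the support vertex `(i, b)` is adjacent
to the numeric vertex `i` (so every numeric vertex is adjacent to exactly two
support vertices, and every support vertex to exactly one numeric vertex).
A `1`-pack has no edges. -/
def packRel : (m : ℕ) → PackV m → PackV m → Prop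
  | 0 => fun x _ => x.elim
  | 1 => fun _ _ => False
  | (_ + 2) => fun x y =>
      match x, y with
      | Sum.inl _, Sum.inr (Sum.inl _) => True
      | Sum.inr (Sum.inl (i, _)), Sum.inr (Sum.inr j) => i = j
      | _, _ => False

/-- The `m`-pack graph. -/
def Pack (m : ℕ) : SimpleGraph (PackV m) := SimpleGraph.fromRel (packRel m)

/-- The `i`-th numeric vertex of an `m`-pack. -/
def packNumeric : (m : ℕ) → Fin m → PackV m
  | 0, i => i.elim0
  | 1, _ => ()
  | (_ + 2), i => Sum.inr (Sum.inr i)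

/-- The base vertex of an `(m+2)`-pack. -/
def packBase (m : ℕ) : PackV (m + 2) := Sum.inl ()

/-- The support vertex of an `(m+2)`-pack attached to the numeric vertex `j`,
on side `b`. -/
def packSupport (m : ℕ) (j : Fin (m + 2)) (b : Bool) : PackV (m + 2) :=
  Sum.inr (Sum.inl (j, b))


/-- The coloring: base blue, support `(j,b)` colored `b`, numeric red. -/
def packC (m : ℕ) : PackV (m + 2) → Bool
  | Sum.inl _ => false
  | Sum.inr (Sum.inl (_, b)) => b
  | Sum.inr (Sum.inr _) => true

/-- Flip the side of a support vertex; fix everything else. -/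
def packFlip (m : ℕ) : PackV (m + 2) → PackV (m + 2)
  | Sum.inr (Sum.inl (j, b)) => Sum.inr (Sum.inl (j, !b))
  | x => x

lemma pv_inr_inr {m : ℕ} (x y : (Fin (m + 2) × Bool) ⊕ Fin (m + 2)) :
    @Eq (PackV (m + 2)) (Sum.inr x) (Sum.inr y) ↔ x = y :=
  ⟨fun h => by injection h, fun h => by rw [h]⟩

lemma pv_inl_inr {m : ℕ} (u : Unit) (x : (Fin (m + 2) × Bool) ⊕ Fin (m + 2)) :
    @Eq (PackV (m + 2)) (Sum.inl u) (Sum.inr x) ↔ False :=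
  ⟨fun h => by injection h, False.elim⟩

lemma pv_inr_inl {m : ℕ} (x : (Fin (m + 2) × Bool) ⊕ Fin (m + 2)) (u : Unit) :
    @Eq (PackV (m + 2)) (Sum.inr x) (Sum.inl u) ↔ False :=
  ⟨fun h => by injection h, False.elim⟩

@[simp] lemma packC_inl (m : ℕ) (u : Unit) : packC m (Sum.inl u) = false := rfl
@[simp] lemma packC_inr_inl (m : ℕ) (k : Fin (m + 2)) (b : Bool) :
    packC m (Sum.inr (Sum.inl (k, b))) = b := rfl
@[simp] lemma packC_inr_inr (m : ℕ) (k : Fin (m + 2)) : packC m (Sum.inr (Sum.inr k)) = true := rfl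
@[simp] lemma packFlip_inl (m : ℕ) (u : Unit) : packFlip m (Sum.inl u) = Sum.inl u := rfl
@[simp] lemma packFlip_inr_inl (m : ℕ) (k : Fin (m + 2)) (b : Bool) :
    packFlip m (Sum.inr (Sum.inl (k, b))) = Sum.inr (Sum.inl (k, !b)) := rfl
@[simp] lemma packFlip_inr_inr (m : ℕ) (k : Fin (m + 2)) :
    packFlip m (Sum.inr (Sum.inr k)) = Sum.inr (Sum.inr k) := rfl
@[simp] lemma pv_inl_inl {m : ℕ} (u v : Unit) :
    @Eq (PackV (m + 2)) (Sum.inl u) (Sum.inl v) ↔ True := ⟨fun _ => trivial, fun _ => rfl⟩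
lemma pack_adj (m : ℕ) (x y : PackV (m + 2)) :
    (Pack (m + 2)).Adj x y ↔ x ≠ y ∧ (packRel (m + 2) x y ∨ packRel (m + 2) y x) :=
  SimpleGraph.fromRel_adj _ _ _
lemma pack_adj_of (m : ℕ) (x y : PackV (m + 2)) (hne : x ≠ y) (h : packRel (m + 2) x y) :
    (Pack (m + 2)).Adj x y := (pack_adj m x y).2 ⟨hne, Or.inl h⟩
lemma pack_not_adj (m : ℕ) (x y : PackV (m + 2)) (h1 : ¬ packRel (m + 2) x y)
    (h2 : ¬ packRel (m + 2) y x) : (Pack (m + 2)).Adj x y ↔ False :=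
  ⟨fun h => ((pack_adj m x y).1 h).2.elim h1 h2, False.elim⟩
@[simp] lemma adj_inl_inl (m : ℕ) (u v : Unit) :
    (Pack (m + 2)).Adj (Sum.inl u) (Sum.inl v) ↔ False := pack_not_adj m _ _ id id
@[simp] lemma adj_inl_inrl (m : ℕ) (u : Unit) p :
    (Pack (m + 2)).Adj (Sum.inl u) (Sum.inr (Sum.inl p)) ↔ True :=
  ⟨fun _ => trivial, fun _ => pack_adj_of m _ _ (fun h => by injection h) trivial⟩
@[simp] lemma adj_inl_inrr (m : ℕ) (u : Unit) k :
    (Pack (m + 2)).Adj (Sum.inl u) (Sum.inr (Sum.inr k)) ↔ False := pack_not_adj m _ _ id id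
@[simp] lemma adj_inrl_inl (m : ℕ) p (u : Unit) :
    (Pack (m + 2)).Adj (Sum.inr (Sum.inl p)) (Sum.inl u) ↔ True :=
  ⟨fun _ => trivial, fun _ => SimpleGraph.adj_symm _ (pack_adj_of m _ _ (fun h => by injection h) trivial)⟩
@[simp] lemma adj_inrl_inrl (m : ℕ) (p q : Fin (m + 2) × Bool) :
    (Pack (m + 2)).Adj (Sum.inr (Sum.inl p)) (Sum.inr (Sum.inl q)) ↔ False :=
  pack_not_adj m _ _ id id
@[simp] lemma adj_inrl_inrr (m : ℕ) (k : Fin (m + 2)) (b : Bool) j :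
    (Pack (m + 2)).Adj (Sum.inr (Sum.inl (k, b))) (Sum.inr (Sum.inr j)) ↔ k = j :=
  ⟨fun h => ((pack_adj m _ _).1 h).2.elim id False.elim,
    fun h => pack_adj_of m _ _ (fun h => by injection h with h; injection h) h⟩
@[simp] lemma adj_inrr_inl (m : ℕ) k (u : Unit) :
    (Pack (m + 2)).Adj (Sum.inr (Sum.inr k)) (Sum.inl u) ↔ False := pack_not_adj m _ _ id id
@[simp] lemma adj_inrr_inrl (m : ℕ) j (k : Fin (m + 2)) (b : Bool) :
    (Pack (m + 2)).Adj (Sum.inr (Sum.inr j)) (Sum.inr (Sum.inl (k, b))) ↔ k = j :=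
  ⟨fun h => (adj_inrl_inrr m k b j).1 (SimpleGraph.adj_symm _ h),
    fun h => SimpleGraph.adj_symm _ ((adj_inrl_inrr m k b j).2 h)⟩
@[simp] lemma adj_inrr_inrr (m : ℕ) (j k : Fin (m + 2)) :
    (Pack (m + 2)).Adj (Sum.inr (Sum.inr j)) (Sum.inr (Sum.inr k)) ↔ False :=
  pack_not_adj m _ _ id id

/-- For every `n = m + 2 > 1`, the `n`-pack admits a Neighborhood Balanced
Coloring (`true` = red, `false` = blue): the base vertex is blue, all `n`
numeric vertices are red, and for each numeric vertex one of its two support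
vertices is blue and the other is red. -/
theorem pack_admits_NBC (m : ℕ) :
    ∃ c : PackV (m + 2) → Bool, IsNBC (Pack (m + 2)) c ∧
      c (packBase m) = false ∧
      (∀ j : Fin (m + 2), c (packNumeric (m + 2) j) = true) ∧
      (∀ j : Fin (m + 2), c (packSupport m j true) ≠ c (packSupport m j false)) := by
  refine ⟨packC m, ?_, rfl, fun j => rfl, fun j => by simp [packC, packSupport]⟩
  intro v
  rcases v with u | (⟨j, b⟩ | j)
  · -- base vertex: flipping the side of a support vertex is a bijection
    apply Nat.card_congr
    refine ⟨fun x => ⟨packFlip m x.1, ?_⟩, fun x => ⟨packFlip m x.1, ?_⟩, ?_, ?_⟩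
    · obtain ⟨w, hadj, hc⟩ := x
      rcases w with u' | (⟨k, b'⟩ | k) <;>
        simp [pv_inr_inr, pv_inl_inr, pv_inr_inl] at hadj hc ⊢ <;>
        exact hc
    · obtain ⟨w, hadj, hc⟩ := x
      rcases w with u' | (⟨k, b'⟩ | k) <;>
        simp [pv_inr_inr, pv_inl_inr, pv_inr_inl] at hadj hc ⊢ <;>
        exact hc
    · rintro ⟨w, hadj, hc⟩
      apply Subtype.ext
      rcases w with u' | (⟨k, b'⟩ | k)
      · rfl
      · cases b' <;> rfl
      · rfl
    · rintro ⟨w, hadj, hc⟩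
      apply Subtype.ext
      rcases w with u' | (⟨k, b'⟩ | k)
      · rfl
      · cases b' <;> rfl
      · rfl
  · -- support vertex (j, b): unique red neighbor (numeric j), unique blue (base)
    have hred : ∀ w : PackV (m + 2),
        ((Pack (m + 2)).Adj (Sum.inr (Sum.inl (j, b))) w ∧ packC m w = true) ↔
          w = Sum.inr (Sum.inr j) := by
      rintro (u' | (⟨k, b'⟩ | k)) <;>
        simp [
          pv_inr_inr, pv_inl_inr, pv_inr_inl, eq_comm]
    have hblue : ∀ w : PackV (m + 2),
        ((Pack (m + 2)).Adj (Sum.inr (Sum.inl (j, b))) w ∧ packC m w = false) ↔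
          w = Sum.inl () := by
      rintro (u' | (⟨k, b'⟩ | k)) <;>
        simp [
          pv_inr_inr, pv_inl_inr, pv_inr_inl]
    rw [Nat.card_congr (Equiv.subtypeEquivRight hred),
      Nat.card_congr (Equiv.subtypeEquivRight hblue)]
    exact Nat.card_congr
      ⟨fun _ => ⟨Sum.inl (), rfl⟩, fun _ => ⟨Sum.inr (Sum.inr j), rfl⟩,
        by rintro ⟨w, rfl⟩; rfl, by rintro ⟨w, rfl⟩; rfl⟩
  · -- numeric vertex j: unique red (support (j,true)) and blue (support (j,false))
    have hred : ∀ w : PackV (m + 2),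
        ((Pack (m + 2)).Adj (Sum.inr (Sum.inr j)) w ∧ packC m w = true) ↔
          w = Sum.inr (Sum.inl (j, true)) := by
      rintro (u' | (⟨k, b'⟩ | k)) <;>
        simp [
          pv_inr_inr, pv_inl_inr, pv_inr_inl, eq_comm]
    have hblue : ∀ w : PackV (m + 2),
        ((Pack (m + 2)).Adj (Sum.inr (Sum.inr j)) w ∧ packC m w = false) ↔
          w = Sum.inr (Sum.inl (j, false)) := by
      rintro (u' | (⟨k, b'⟩ | k)) <;>
        simp [
          pv_inr_inr, pv_inl_inr, pv_inr_inl, eq_comm]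
    rw [Nat.card_congr (Equiv.subtypeEquivRight hred),
      Nat.card_congr (Equiv.subtypeEquivRight hblue)]
    exact Nat.card_congr
      ⟨fun _ => ⟨Sum.inr (Sum.inl (j, false)), rfl⟩,
        fun _ => ⟨Sum.inr (Sum.inl (j, true)), rfl⟩,
        by rintro ⟨w, rfl⟩; rfl, by rintro ⟨w, rfl⟩; rfl⟩
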